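/- arXiv:1703.02703 — 5 statements merged into one kernel-verified Lean document; each statement's English description precedes it below -/
import Mathlib

section
/- Let S = k[x_0,...,x_n] and let I_m ⊆ S_m be spanned by an initial revlex segment of degree m monomials containing x_{n-1}^m. Then codim_{S_{m+1}}(S_1·I_m) = codim_{S_m}(I_m), i.e., the number of degree m monomials not in I_m equals the number of degree m+1 monomials not in S_1·I_m. -/
open MvPolynomial
open Module Submodule

lemma finrank_span_monomial_image {k : Type*} [Field k] {N : ℕ}
    (A : Finset (Fin N →₀ ℕ)) :
    finrank k (span k ((fun ν => (monomial ν (1 : k) : MvPolynomial (Fin N) k)) '' ↑A))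
      = A.card := by
  classical
  have hinj : Function.Injective (fun ν => (monomial ν (1 : k) : MvPolynomial (Fin N) k)) :=
    monomial_left_injective one_ne_zero
  rw [← Finset.coe_image]
  have li : LinearIndependent k
      ((↑) : (A.image (fun ν => (monomial ν (1 : k) : MvPolynomial (Fin N) k)) : Set (MvPolynomial (Fin N) k)) → MvPolynomial (Fin N) k) := by
    have h0 : LinearIndependent k (fun s : Fin N →₀ ℕ => (monomial s (1 : k) : MvPolynomial (Fin N) k)) := by
      have := (basisMonomials (Fin N) k).linearIndependent
      rwa [coe_basisMonomials] at this
    refine h0.linearIndepOn_id.mono ?_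
    intro x hx
    simp only [Finset.coe_image, Set.mem_image, Finset.mem_coe] at hx
    obtain ⟨ν, _, rfl⟩ := hx
    exact Set.mem_range_self ν
  rw [finrank_span_finset_eq_card li, Finset.card_image_of_injective _ hinj]

lemma homog_eq_span {k : Type*} [Field k] {N : ℕ} (m : ℕ) :
    homogeneousSubmodule (Fin N) k m =
      span k ((fun ν => (monomial ν (1 : k) : MvPolynomial (Fin N) k)) ''
        ↑(Finset.finsuppAntidiag (Finset.univ : Finset (Fin N)) m)) := by
  classical
  rw [homogeneousSubmodule_eq_finsupp_supported, AddMonoidAlgebra.supported_eq_span_single]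
  congr 1
  have hsum : ∀ d : Fin N →₀ ℕ, d.degree = Finset.univ.sum ⇑d := fun d =>
    Finset.sum_subset (Finset.subset_univ _) (fun i _ hi => Finsupp.notMem_support_iff.mp hi)
  have hset : { d : Fin N →₀ ℕ | d.degree = m }
      = ↑(Finset.finsuppAntidiag (Finset.univ : Finset (Fin N)) m) := by
    ext d
    simp [Finset.mem_finsuppAntidiag, hsum d]
  rw [hset]
  ext p
  simp [single_eq_monomial]

/-- `RevLexGt α β` means `x^α ≻ x^β` in the degree reverse lexicographic order. -/
def RevLexGt {N : ℕ} (α β : Fin N →₀ ℕ) : Prop :=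
  ∃ i, α i < β i ∧ ∀ j, i < j → α j = β j

/-- `W` is an initial revlex segment in degree `m`. -/
def IsRevLexSegment {N : ℕ} (m : ℕ) (W : Set (Fin N →₀ ℕ)) : Prop :=
  (∀ α ∈ W, ∑ i, α i = m) ∧
  ∀ α β : Fin N →₀ ℕ, (∑ i, α i = m) → β ∈ W → RevLexGt α β → α ∈ W

/-- Lemma 5.1(2): if `I_m` is spanned by an initial revlex segment containing `x_{n-1}^m`,
then the codimension of `S_1 · I_m` in `S_{m+1}` equals the codimension of `I_m` in `S_m`. -/
theorem stmt1 {k : Type*} [Field k] [CharZero k] (n m : ℕ) (hn : 1 ≤ n)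
    (W : Set (Fin (n + 1) →₀ ℕ)) (hW : IsRevLexSegment m W)
    (hx : Finsupp.single (⟨n - 1, by omega⟩ : Fin (n + 1)) m ∈ W) :
    Module.finrank k (homogeneousSubmodule (Fin (n + 1)) k (m + 1)) -
      Module.finrank k (Submodule.span k {p : MvPolynomial (Fin (n + 1)) k |
        ∃ (i : Fin (n + 1)) (μ : Fin (n + 1) →₀ ℕ), μ ∈ W ∧ p = X i * monomial μ 1}) =
    Module.finrank k (homogeneousSubmodule (Fin (n + 1)) k m) -
      Module.finrank k (Submodule.span k
        ((fun ν => (monomial ν (1 : k) : MvPolynomial (Fin (n + 1)) k)) '' W)) := by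
  classical
  set en : Fin (n + 1) := Fin.last n with hen
  set xn1 : Fin (n + 1) := ⟨n - 1, by omega⟩ with hxn1
  have hxn1en : xn1 ≠ en := by
    intro h
    have := congrArg Fin.val h
    simp [hxn1, hen, Fin.last] at this
    omega
  set T : ℕ → Finset (Fin (n + 1) →₀ ℕ) :=
    fun d => Finset.finsuppAntidiag Finset.univ d with hT
  have hTmem : ∀ (d : ℕ) (α : Fin (n + 1) →₀ ℕ),
      α ∈ T d ↔ Finset.univ.sum ⇑α = d := by
    intro d α
    simp [hT, Finset.mem_finsuppAntidiag]
  have hWsub : W ⊆ ↑(T m) := by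
    intro α hα
    rw [Finset.mem_coe, hTmem]
    exact hW.1 α hα
  have hWfin : W.Finite := Set.Finite.subset (T m).finite_toSet hWsub
  have hWcoe : (hWfin.toFinset : Set (Fin (n + 1) →₀ ℕ)) = W := hWfin.coe_toFinset
  set WF := hWfin.toFinset with hWF
  set S1F : Finset (Fin (n + 1) →₀ ℕ) :=
    Finset.image (fun p : Fin (n + 1) × (Fin (n + 1) →₀ ℕ) => p.2 + Finsupp.single p.1 1)
      (Finset.univ ×ˢ WF) with hS1F
  have hS1mem : ∀ ν, ν ∈ S1F ↔ ∃ i μ, μ ∈ W ∧ ν = μ + Finsupp.single i 1 := by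
    intro ν
    simp only [hS1F, Finset.mem_image, Finset.mem_product, Finset.mem_univ, true_and,
      Prod.exists]
    constructor
    · rintro ⟨i, μ, hμ, rfl⟩
      exact ⟨i, μ, hWfin.mem_toFinset.mp hμ, rfl⟩
    · rintro ⟨i, μ, hμ, rfl⟩
      exact ⟨i, μ, hWfin.mem_toFinset.mpr hμ, rfl⟩
  have hsing : ∀ i : Fin (n + 1), Finset.univ.sum ⇑(Finsupp.single i (1 : ℕ)) = 1 := by
    intro i
    simp [Finsupp.single_apply]
  have hsumadd : ∀ (α : Fin (n + 1) →₀ ℕ) (i : Fin (n + 1)),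
      Finset.univ.sum ⇑(α + Finsupp.single i (1 : ℕ)) = Finset.univ.sum ⇑α + 1 := by
    intro α i
    simp only [Finsupp.coe_add, Pi.add_apply, Finset.sum_add_distrib, hsing i]
  have hS1sub : S1F ⊆ T (m + 1) := by
    intro ν hν
    obtain ⟨i, μ, hμ, rfl⟩ := (hS1mem ν).mp hν
    rw [hTmem, hsumadd, hW.1 μ hμ]
  -- every degree-m exponent vanishing at the last variable lies in W
  have hzeroW : ∀ μ : Fin (n + 1) →₀ ℕ, Finset.univ.sum ⇑μ = m → μ en = 0 → μ ∈ W := by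
    intro μ hdeg hz
    have hle : μ xn1 ≤ m := by
      rw [← hdeg]
      exact Finset.single_le_sum (fun i _ => Nat.zero_le _) (Finset.mem_univ xn1)
    rcases lt_or_eq_of_le hle with hlt | heq
    · refine hW.2 μ _ hdeg hx ⟨xn1, ?_, ?_⟩
      · rwa [Finsupp.single_eq_same]
      · intro j hj
        have hj' : j = en := by
          apply Fin.ext
          have h1 : (xn1 : Fin (n + 1)).val < j.val := hj
          have h2 := j.isLt
          simp only [hxn1] at h1
          simp only [hen, Fin.val_last]
          omega
        subst hj'
        rw [hz, Finsupp.single_eq_of_ne' hxn1en]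
    · have hμeq : μ = Finsupp.single xn1 m := by
        have hrest : ∑ i ∈ Finset.univ.erase xn1, μ i = 0 := by
          have h2 : μ xn1 + ∑ i ∈ Finset.univ.erase xn1, μ i = m := by
            rw [Finset.add_sum_erase Finset.univ ⇑μ (Finset.mem_univ xn1)]
            exact hdeg
          omega
        ext j
        by_cases hji : j = xn1
        · subst hji
          rw [Finsupp.single_eq_same, heq]
        · rw [Finsupp.single_eq_of_ne' (Ne.symm hji)]
          exact (Finset.sum_eq_zero_iff.mp hrest) j
            (Finset.mem_erase.mpr ⟨hji, Finset.mem_univ j⟩)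
      rw [hμeq]
      exact hx
  -- the bijection between the complements
  have hmaps : ∀ α ∈ T m \ WF, α + Finsupp.single en 1 ∈ T (m + 1) \ S1F := by
    intro α hα
    rw [Finset.mem_sdiff] at hα ⊢
    obtain ⟨hαT, hαW⟩ := hα
    rw [hTmem] at hαT
    have hαnotW : α ∉ W := by
      rwa [hWF, Set.Finite.mem_toFinset] at hαW
    refine ⟨by rw [hTmem, hsumadd, hαT], ?_⟩
    intro hbad
    obtain ⟨i, μ, hμ, heq⟩ := (hS1mem _).mp hbad
    by_cases hi : i = en
    · subst hi
      have : α = μ := by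
        ext j
        have := congrArg (fun f : Fin (n + 1) →₀ ℕ => f j) heq
        simp only [Finsupp.add_apply] at this
        omega
      exact hαnotW (this ▸ hμ)
    · have hμen : α en < μ en := by
        have := congrArg (fun f : Fin (n + 1) →₀ ℕ => f en) heq
        simp only [Finsupp.add_apply, Finsupp.single_eq_same,
          Finsupp.single_eq_of_ne' hi] at this
        omega
      refine hαnotW (hW.2 α μ hαT hμ ⟨en, hμen, ?_⟩)
      intro j hj
      exact absurd hj (by
        have := j.isLt
        simp only [hen, Fin.lt_def, Fin.val_last]
        omega)
  have hinjmap : ∀ α₁ ∈ T m \ WF, ∀ α₂ ∈ T m \ WF,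
      α₁ + Finsupp.single en 1 = α₂ + Finsupp.single en 1 → α₁ = α₂ := by
    intro α₁ _ α₂ _ h
    ext j
    have := congrArg (fun f : Fin (n + 1) →₀ ℕ => f j) h
    simp only [Finsupp.add_apply] at this
    omega
  have hsurj : ∀ ν ∈ T (m + 1) \ S1F, ∃ α, ∃ hα : α ∈ T m \ WF,
      α + Finsupp.single en 1 = ν := by
    intro ν hν
    rw [Finset.mem_sdiff] at hν
    obtain ⟨hνT, hνS⟩ := hν
    rw [hTmem] at hνT
    have hνen : ν en ≠ 0 := by
      intro hz
      have hex : ∃ i, ν i ≠ 0 := by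
        by_contra hall
        push_neg at hall
        have : Finset.univ.sum ⇑ν = 0 := Finset.sum_eq_zero fun i _ => hall i
        omega
      obtain ⟨i, hi⟩ := hex
      have hien : i ≠ en := fun h => hi (h ▸ hz)
      set μ := ν - Finsupp.single i 1 with hμdef
      have heq : μ + Finsupp.single i 1 = ν := by
        ext j
        rw [Finsupp.add_apply, hμdef, Finsupp.tsub_apply]
        by_cases hji : j = i
        · subst hji
          rw [Finsupp.single_eq_same]
          omega
        · rw [Finsupp.single_eq_of_ne' (Ne.symm hji)]
          omega
      have hμdeg : Finset.univ.sum ⇑μ = m := by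
        have := hsumadd μ i
        rw [heq] at this
        omega
      have hμen : μ en = 0 := by
        rw [hμdef, Finsupp.tsub_apply, Finsupp.single_eq_of_ne' hien, hz]
        omega
      exact hνS ((hS1mem ν).mpr ⟨i, μ, hzeroW μ hμdeg hμen, heq.symm⟩)
    set α := ν - Finsupp.single en 1 with hαdef
    have heq : α + Finsupp.single en 1 = ν := by
      ext j
      rw [Finsupp.add_apply, hαdef, Finsupp.tsub_apply]
      by_cases hji : j = en
      · subst hji
        rw [Finsupp.single_eq_same]
        omega
      · rw [Finsupp.single_eq_of_ne' (Ne.symm hji)]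
        omega
    have hαdeg : Finset.univ.sum ⇑α = m := by
      have := hsumadd α en
      rw [heq] at this
      omega
    have hαnotW : α ∉ W := by
      intro hαW
      exact hνS ((hS1mem ν).mpr ⟨en, α, hαW, heq.symm⟩)
    refine ⟨α, ?_, heq⟩
    rw [Finset.mem_sdiff, hTmem]
    exact ⟨hαdeg, fun h => hαnotW (by rwa [hWF, Set.Finite.mem_toFinset] at h)⟩
  have hcard : (T m \ WF).card = (T (m + 1) \ S1F).card :=
    Finset.card_bij (fun α _ => α + Finsupp.single en 1) hmaps hinjmap hsurj
  -- rewrite the spans as spans of monomial images of finsets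
  have hLset : {p : MvPolynomial (Fin (n + 1)) k |
      ∃ (i : Fin (n + 1)) (μ : Fin (n + 1) →₀ ℕ), μ ∈ W ∧ p = X i * monomial μ 1}
      = (fun ν => (monomial ν (1 : k) : MvPolynomial (Fin (n + 1)) k)) '' ↑S1F := by
    ext p
    simp only [Set.mem_setOf_eq, Set.mem_image, Finset.mem_coe, hS1mem]
    constructor
    · rintro ⟨i, μ, hμ, rfl⟩
      refine ⟨μ + Finsupp.single i 1, ⟨i, μ, hμ, rfl⟩, ?_⟩
      rw [X, monomial_mul, one_mul]
      exact congrArg (fun t : Fin (n + 1) →₀ ℕ => (monomial t (1 : k) : MvPolynomial (Fin (n + 1)) k)) (add_comm _ _)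
    · rintro ⟨ν, ⟨i, μ, hμ, rfl⟩, rfl⟩
      refine ⟨i, μ, hμ, ?_⟩
      rw [X, monomial_mul, one_mul]
      exact congrArg (fun t : Fin (n + 1) →₀ ℕ => (monomial t (1 : k) : MvPolynomial (Fin (n + 1)) k)) (add_comm _ _)
  rw [hLset, ← hWcoe, homog_eq_span (N := n + 1) (k := k) (m + 1),
    homog_eq_span (N := n + 1) (k := k) m,
    finrank_span_monomial_image, finrank_span_monomial_image,
    finrank_span_monomial_image, finrank_span_monomial_image]
  have hWFsub : WF ⊆ T m := by
    intro α hα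
    exact hWsub (by rwa [hWF, Set.Finite.mem_toFinset] at hα)
  have e1 := Finset.card_sdiff_of_subset hS1sub
  have e2 := Finset.card_sdiff_of_subset hWFsub
  have l1 := Finset.card_le_card hS1sub
  have l2 := Finset.card_le_card hWFsub
  show (T (m + 1)).card - S1F.card = (T m).card - WF.card
  omega
end

section
/- Let J be a graded ideal of S = k[x_0,...,x_n] such that J_{m'} ≠ 0 for some m' < m and J_m is spanned by an initial revlex segment of degree m monomials. Then x_{n-1}^m ∈ J_m, and consequently dim_k S_{m+l} − dim_k (S_l·J_m) = dim_k S_m − dim_k J_m for all l ≥ 0. -/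
open MvPolynomial

noncomputable instance {k : Type*} [CommRing k] {n : ℕ} :
    GradedAlgebra (homogeneousSubmodule (Fin (n + 1)) k) :=
  MvPolynomial.gradedAlgebra

namespace Stmt6Aux

lemma degree_eq_sum {N : ℕ} (d : Fin N →₀ ℕ) : d.degree = ∑ i, d i :=
  Finset.sum_subset (Finset.subset_univ _) (fun _ _ hi => Finsupp.notMem_support_iff.mp hi)

lemma finite_deg {N d : ℕ} : {α : Fin N →₀ ℕ | ∑ i, α i = d}.Finite :=
  (Finsupp.finite_of_degree_le d).subset (fun α hα => by
    simp only [Set.mem_setOf_eq] at *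
    rw [degree_eq_sum]; omega)

lemma sum_single_eq {N : ℕ} (a : Fin N) (b : ℕ) : ∑ i, Finsupp.single a b i = b := by
  simp only [Finsupp.single_apply]
  rw [Finset.sum_ite_eq]
  simp

variable {k : Type*} [Field k]

lemma image_eq {N : ℕ} (A : Set (Fin N →₀ ℕ)) :
    (fun ν => (monomial ν (1 : k) : MvPolynomial (Fin N) k)) '' A
      = (fun ν => (AddMonoidAlgebra.single ν (1 : k) : MvPolynomial (Fin N) k)) '' A := by
  simp only [single_eq_monomial]

lemma homSub_eq_span (N d : ℕ) :
    homogeneousSubmodule (Fin N) k d =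
      Submodule.span k ((fun ν => (monomial ν (1 : k) : MvPolynomial (Fin N) k)) ''
        {α | ∑ i, α i = d}) := by
  rw [homogeneousSubmodule_eq_finsupp_supported, image_eq, ← AddMonoidAlgebra.supported_eq_span_single]
  congr 1
  ext α
  simp [degree_eq_sum]

lemma mem_span_monomials {N : ℕ} {A : Set (Fin N →₀ ℕ)} {f : MvPolynomial (Fin N) k} :
    f ∈ Submodule.span k ((fun ν => (monomial ν (1 : k) : MvPolynomial (Fin N) k)) '' A)
      ↔ ↑f.support ⊆ A := by
  rw [image_eq, ← AddMonoidAlgebra.supported_eq_span_single]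
  exact AddMonoidAlgebra.mem_supported

lemma finrank_span_monomials {N : ℕ} {A : Set (Fin N →₀ ℕ)} (hA : A.Finite) :
    Module.finrank k
      (Submodule.span k ((fun ν => (monomial ν (1 : k) : MvPolynomial (Fin N) k)) '' A))
      = A.ncard := by
  have hinj : Function.Injective (fun ν => (monomial ν (1 : k) : MvPolynomial (Fin N) k)) :=
    monomial_left_injective one_ne_zero
  have hfin := hA.image (fun ν => (monomial ν (1 : k) : MvPolynomial (Fin N) k))
  haveI := hfin.fintype
  have hli : LinearIndependent k
      ((↑) : ((fun ν => (monomial ν (1 : k) : MvPolynomial (Fin N) k)) '' A)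
        → MvPolynomial (Fin N) k) := by
    show LinearIndepOn k id _
    apply LinearIndepOn.mono _ (Set.image_subset_range _ _)
    have h := (basisMonomials (Fin N) k).linearIndependent
    rw [coe_basisMonomials] at h
    exact (linearIndepOn_id_range_iff hinj).mpr h
  rw [finrank_span_set_eq_card hli, ← Set.ncard_eq_toFinset_card',
    Set.ncard_image_of_injective _ hinj]

end Stmt6Aux

namespace Stmt6Aux

lemma sum_add_eq {N : ℕ} (a b : Fin N →₀ ℕ) : ∑ i, (a + b) i = (∑ i, a i) + ∑ i, b i := by
  simp [Finsupp.add_apply, Finset.sum_add_distrib]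

lemma exists_le_sum {N : ℕ} (m : ℕ) :
    ∀ (c : ℕ) (δ : Fin N →₀ ℕ), ∑ i, δ i = m + c → ∃ ν ≤ δ, ∑ i, ν i = m
  | 0, δ, h => ⟨δ, le_refl _, h⟩
  | c + 1, δ, h => by
    have hpos : ∃ i, 0 < δ i := by
      by_contra hc
      push_neg at hc
      have : ∑ i, δ i = 0 := Finset.sum_eq_zero (fun i _ => Nat.le_zero.mp (hc i))
      omega
    obtain ⟨i, hi⟩ := hpos
    have hle : Finsupp.single i 1 ≤ δ := Finsupp.single_le_iff.mpr hi
    set δ' : Fin N →₀ ℕ := δ - Finsupp.single i 1 with hδ'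
    have hadd : δ' + Finsupp.single i 1 = δ := tsub_add_cancel_of_le hle
    have hsum : ∑ j, δ' j = m + c := by
      have h2 := congrArg (fun f : Fin N →₀ ℕ => ∑ j, f j) hadd
      simp only [sum_add_eq, sum_single_eq] at h2
      omega
    obtain ⟨ν, hν, hνs⟩ := exists_le_sum m c δ' hsum
    exact ⟨ν, le_trans hν tsub_le_self, hνs⟩

lemma aux_last {n : ℕ} {ν β : Fin (n + 1) →₀ ℕ} (h : ∀ i, i ≠ Fin.last n → ν i ≤ β i)
    (hs : ∑ i, ν i = ∑ i, β i) :
    β (Fin.last n) ≤ ν (Fin.last n) ∧ (ν (Fin.last n) = β (Fin.last n) → ν = β) := by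
  rw [Fin.sum_univ_castSucc, Fin.sum_univ_castSucc (f := fun i => β i)] at hs
  have hterm : ∀ i ∈ Finset.univ, ν (Fin.castSucc i) ≤ β (Fin.castSucc i) :=
    fun i _ => h _ (Fin.castSucc_lt_last i).ne
  have hsum' : ∑ i : Fin n, ν (Fin.castSucc i) ≤ ∑ i : Fin n, β (Fin.castSucc i) :=
    Finset.sum_le_sum hterm
  refine ⟨by omega, fun heq => ?_⟩
  have hsums : ∑ i : Fin n, ν (Fin.castSucc i) = ∑ i : Fin n, β (Fin.castSucc i) := by omega
  have hall := (Finset.sum_eq_sum_iff_of_le hterm).mp hsums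
  ext j
  induction j using Fin.lastCases with
  | last => exact heq
  | cast i => exact hall i (Finset.mem_univ i)

lemma key {n m l : ℕ} {W : Set (Fin (n + 1) →₀ ℕ)} (hW : IsRevLexSegment m W)
    {β0 : Fin (n + 1) →₀ ℕ} (hβ0 : β0 ∈ W) (hβ0n : β0 (Fin.last n) ≠ 0) :
    {γ : Fin (n + 1) →₀ ℕ | ∑ i, γ i = m + l} \
        {γ | ∃ lam nu, (∑ i, lam i = l) ∧ nu ∈ W ∧ γ = lam + nu}
      = (fun β => β + Finsupp.single (Fin.last n) l) '' ({β | ∑ i, β i = m} \ W) := by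
  ext γ
  constructor
  · rintro ⟨hγd, hγV⟩
    simp only [Set.mem_setOf_eq] at hγd hγV
    by_cases hcase : l < γ (Fin.last n)
    · have hle : Finsupp.single (Fin.last n) l ≤ γ := Finsupp.single_le_iff.mpr hcase.le
      have hadd : (γ - Finsupp.single (Fin.last n) l) + Finsupp.single (Fin.last n) l = γ :=
        tsub_add_cancel_of_le hle
      have hsum : ∑ i, (γ - Finsupp.single (Fin.last n) l) i = m := by
        have h2 := congrArg (fun f : Fin (n + 1) →₀ ℕ => ∑ i, f i) hadd
        simp only [sum_add_eq, sum_single_eq] at h2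
        omega
      refine ⟨γ - Finsupp.single (Fin.last n) l, ⟨hsum, fun hWmem => ?_⟩, hadd⟩
      exact hγV ⟨Finsupp.single (Fin.last n) l, γ - Finsupp.single (Fin.last n) l,
        sum_single_eq _ _, hWmem, (hadd.symm.trans (add_comm _ _))⟩
    · exfalso
      push_neg at hcase
      have hle : Finsupp.single (Fin.last n) (γ (Fin.last n)) ≤ γ :=
        Finsupp.single_le_iff.mpr le_rfl
      have hadd : (γ - Finsupp.single (Fin.last n) (γ (Fin.last n)))
          + Finsupp.single (Fin.last n) (γ (Fin.last n)) = γ := tsub_add_cancel_of_le hle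
      have hsum : ∑ i, (γ - Finsupp.single (Fin.last n) (γ (Fin.last n))) i
          = m + (l - γ (Fin.last n)) := by
        have h2 := congrArg (fun f : Fin (n + 1) →₀ ℕ => ∑ i, f i) hadd
        simp only [sum_add_eq, sum_single_eq] at h2
        omega
      obtain ⟨ν, hν, hνs⟩ := exists_le_sum m _ _ hsum
      have hνL : ν (Fin.last n) = 0 := by
        have h1 := hν (Fin.last n)
        have h2 : (γ - Finsupp.single (Fin.last n) (γ (Fin.last n))) (Fin.last n) = 0 := by
          rw [Finsupp.tsub_apply, Finsupp.single_eq_same]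
          omega
        omega
      have hνW : ν ∈ W := hW.2 ν β0 hνs hβ0
        ⟨Fin.last n, by rw [hνL]; exact Nat.pos_of_ne_zero hβ0n,
          fun j hj => absurd (Fin.le_last j) (not_le.mpr hj)⟩
      have hνγ : ν ≤ γ := le_trans hν tsub_le_self
      have haddν : (γ - ν) + ν = γ := tsub_add_cancel_of_le hνγ
      have hsumν : ∑ i, (γ - ν) i = l := by
        have h2 := congrArg (fun f : Fin (n + 1) →₀ ℕ => ∑ i, f i) haddν
        simp only [sum_add_eq] at h2
        omega
      exact hγV ⟨γ - ν, ν, hsumν, hνW, haddν.symm⟩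
  · rintro ⟨β, ⟨hβd, hβW⟩, rfl⟩
    simp only [Set.mem_setOf_eq] at hβd
    constructor
    · simp only [Set.mem_setOf_eq, sum_add_eq, sum_single_eq, hβd]
    · rintro ⟨lam, ν, hlam, hνW, heq⟩
      have hνd : ∑ i, ν i = m := hW.1 ν hνW
      have hpt : ∀ i, i ≠ Fin.last n → ν i ≤ β i := by
        intro i hi
        have h2 := DFunLike.congr_fun heq i
        simp only [Finsupp.add_apply, Finsupp.single_apply] at h2
        rw [if_neg (fun hc => hi hc.symm)] at h2
        omega
      have haux := aux_last hpt (by omega)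
      rcases haux.1.lt_or_eq with hlt | heq2
      · exact hβW (hW.2 β ν hβd hνW
          ⟨Fin.last n, hlt, fun j hj => absurd (Fin.le_last j) (not_le.mpr hj)⟩)
      · exact hβW (haux.2 heq2.symm ▸ hνW)

end Stmt6Aux



/-- Corollary 5.2 (key step): if `J` is a graded ideal with `J_{m'} ≠ 0` for some `m' < m`
and `J_m` is spanned by an initial revlex segment, then `x_{n-1}^m ∈ J_m` and consequently
`dim S_{m+l} − dim (S_l·J_m) = dim S_m − dim J_m` for all `l ≥ 0`. -/
theorem stmt6 {k : Type*} [Field k] [CharZero k] (n m : ℕ) (hn : 1 ≤ n)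
    (J : Ideal (MvPolynomial (Fin (n + 1)) k))
    (hJ : J.IsHomogeneous (homogeneousSubmodule (Fin (n + 1)) k))
    (hlow : ∃ m' < m, (Submodule.restrictScalars k J ⊓
      homogeneousSubmodule (Fin (n + 1)) k m') ≠ ⊥)
    (W : Set (Fin (n + 1) →₀ ℕ)) (hW : IsRevLexSegment m W)
    (hspan : Submodule.restrictScalars k J ⊓ homogeneousSubmodule (Fin (n + 1)) k m =
      Submodule.span k ((fun ν => (monomial ν (1 : k) : MvPolynomial (Fin (n + 1)) k)) '' W)) :
    (monomial (Finsupp.single (⟨n - 1, by omega⟩ : Fin (n + 1)) m) (1 : k) ∈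
      Submodule.restrictScalars k J ⊓ homogeneousSubmodule (Fin (n + 1)) k m) ∧
    ∀ l : ℕ,
      Module.finrank k (homogeneousSubmodule (Fin (n + 1)) k (m + l)) -
        Module.finrank k ((homogeneousSubmodule (Fin (n + 1)) k l *
          (Submodule.restrictScalars k J ⊓ homogeneousSubmodule (Fin (n + 1)) k m) :
          Submodule k (MvPolynomial (Fin (n + 1)) k))) =
      Module.finrank k (homogeneousSubmodule (Fin (n + 1)) k m) -
        Module.finrank k ↥(Submodule.restrictScalars k J ⊓
          homogeneousSubmodule (Fin (n + 1)) k m) := by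
  classical
  obtain ⟨m', hm'lt, hne⟩ := hlow
  obtain ⟨p, hpmem, hp0⟩ := (Submodule.ne_bot_iff _).mp hne
  obtain ⟨hpJ, hphom⟩ := Submodule.mem_inf.mp hpmem
  set L : Fin (n + 1) := Fin.last n with hL
  set g : MvPolynomial (Fin (n + 1)) k := monomial (Finsupp.single L (m - m')) 1 * p with hg
  have hgJ : g ∈ J := J.mul_mem_left _ hpJ
  have hghom : g ∈ homogeneousSubmodule (Fin (n + 1)) k m := by
    rw [mem_homogeneousSubmodule]
    have h1 : MvPolynomial.IsHomogeneous (monomial (Finsupp.single L (m - m')) (1 : k))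
        (m - m') := by
      rw [← X_pow_eq_monomial]; exact isHomogeneous_X_pow _ _
    have h2 := h1.mul ((mem_homogeneousSubmodule _ _).mp hphom)
    rwa [Nat.sub_add_cancel hm'lt.le] at h2
  have hg0 : g ≠ 0 :=
    mul_ne_zero (by rw [← X_pow_eq_monomial]; exact pow_ne_zero _ (X_ne_zero _)) hp0
  have hgspan : (↑g.support : Set _) ⊆ W := by
    rw [← Stmt6Aux.mem_span_monomials, ← hspan]
    exact Submodule.mem_inf.mpr ⟨hgJ, hghom⟩
  obtain ⟨β0, hβ0s⟩ := MvPolynomial.support_nonempty.mpr hg0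
  have hβ0W : β0 ∈ W := hgspan hβ0s
  have hβ0L : β0 L ≠ 0 := by
    have hc : coeff β0 g ≠ 0 := MvPolynomial.mem_support_iff.mp hβ0s
    rw [hg, coeff_monomial_mul'] at hc
    by_cases hle : Finsupp.single L (m - m') ≤ β0
    · have h3 := Finsupp.single_le_iff.mp hle
      omega
    · rw [if_neg hle] at hc
      exact absurd rfl hc
  have hnotlast : (⟨n - 1, by omega⟩ : Fin (n + 1)) ≠ L := by
    rw [hL, Fin.ne_iff_vne]
    simp [Fin.last]
    omega
  have hxW : Finsupp.single (⟨n - 1, by omega⟩ : Fin (n + 1)) m ∈ W := by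
    refine hW.2 _ β0 (Stmt6Aux.sum_single_eq _ _) hβ0W
      ⟨L, ?_, fun j hj => absurd (Fin.le_last j) (not_le.mpr hj)⟩
    rw [Finsupp.single_eq_of_ne' hnotlast]
    exact Nat.pos_of_ne_zero hβ0L
  constructor
  · rw [hspan]
    exact Submodule.subset_span ⟨_, hxW, rfl⟩
  · intro l
    set V : Set (Fin (n + 1) →₀ ℕ) :=
      {γ | ∃ lam nu, (∑ i, lam i = l) ∧ nu ∈ W ∧ γ = lam + nu} with hV
    have hWsub : W ⊆ {β : Fin (n + 1) →₀ ℕ | ∑ i, β i = m} := fun α h => hW.1 α h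
    have hWfin : W.Finite := Stmt6Aux.finite_deg.subset hWsub
    have hVsub : V ⊆ {γ : Fin (n + 1) →₀ ℕ | ∑ i, γ i = m + l} := by
      rintro γ ⟨lam, nu, hlam, hnu, rfl⟩
      have := hW.1 nu hnu
      simp only [Set.mem_setOf_eq, Stmt6Aux.sum_add_eq]
      omega
    have hVfin : V.Finite := Stmt6Aux.finite_deg.subset hVsub
    have hprod : (homogeneousSubmodule (Fin (n + 1)) k l *
          (Submodule.restrictScalars k J ⊓ homogeneousSubmodule (Fin (n + 1)) k m) :
          Submodule k (MvPolynomial (Fin (n + 1)) k)) =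
        Submodule.span k ((fun ν => (monomial ν (1 : k) : MvPolynomial (Fin (n + 1)) k)) '' V) := by
      rw [hspan, Stmt6Aux.homSub_eq_span, Submodule.span_mul_span]
      congr 1
      ext f
      constructor
      · intro hf
        rw [Set.mem_mul] at hf
        obtain ⟨x, ⟨lam, hlam, rfl⟩, y, ⟨nu, hnu, rfl⟩, rfl⟩ := hf
        refine ⟨lam + nu, ⟨lam, nu, hlam, hnu, rfl⟩, ?_⟩
        simp [monomial_mul]
      · rintro ⟨γ, ⟨lam, nu, hlam, hnu, rfl⟩, rfl⟩
        show (monomial (lam + nu) (1 : k) : MvPolynomial (Fin (n + 1)) k) ∈ _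
        have heq : (monomial (lam + nu) (1 : k) : MvPolynomial (Fin (n + 1)) k) =
            monomial lam 1 * monomial nu 1 := by simp [monomial_mul]
        rw [heq]
        exact Set.mul_mem_mul ⟨lam, hlam, rfl⟩ ⟨nu, hnu, rfl⟩
    have hinj' : Function.Injective (fun β : Fin (n + 1) →₀ ℕ => β + Finsupp.single L l) := by
      intro a b h
      ext i
      have h2 := DFunLike.congr_fun h i
      simp only [Finsupp.add_apply] at h2
      omega
    have hdiff := Stmt6Aux.key (l := l) hW hβ0W hβ0L
    have hcard : ({γ : Fin (n + 1) →₀ ℕ | ∑ i, γ i = m + l}.ncard - V.ncard)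
        = ({β : Fin (n + 1) →₀ ℕ | ∑ i, β i = m}.ncard - W.ncard) := by
      rw [← Set.ncard_diff hVsub hVfin, ← Set.ncard_diff hWsub hWfin, hdiff,
        Set.ncard_image_of_injective _ hinj']
    rw [hprod, hspan, Stmt6Aux.homSub_eq_span (n + 1) (m + l), Stmt6Aux.homSub_eq_span (n + 1) m,
      Stmt6Aux.finrank_span_monomials hVfin, Stmt6Aux.finrank_span_monomials hWfin,
      Stmt6Aux.finrank_span_monomials Stmt6Aux.finite_deg, Stmt6Aux.finrank_span_monomials Stmt6Aux.finite_deg]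
    exact hcard
end

section
/- Let J be a graded ideal of S = k[x_0,...,x_n] such that J is not generated in degrees ≥ m (i.e., J_{m'} ≠ 0 for some m' < m) and J_m is spanned by an initial revlex segment. If moreover J_{m+l} = S_l·J_m for all l ≥ 0, then the Hilbert function of S/J is eventually constant (the Hilbert polynomial of J is constant). -/
open MvPolynomial

/- ### Auxiliary machinery -/

/-- Span of a set of monomials. -/
noncomputable abbrev Msp (k : Type*) [Field k] (n : ℕ) (T : Set (Fin (n+1) →₀ ℕ)) :
    Submodule k (MvPolynomial (Fin (n+1)) k) :=
  Submodule.span k ((fun ν => (monomial ν (1 : k) : MvPolynomial (Fin (n+1)) k)) '' T)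

lemma degEq {n : ℕ} (ν : Fin (n+1) →₀ ℕ) : ∑ i, ν i = ν.degree :=
  (Finset.sum_subset ν.support.subset_univ (fun i _ h => Finsupp.notMem_support_iff.mp h)).symm

lemma sum_single_aux {n : ℕ} (a : Fin (n+1)) (b : ℕ) :
    ∑ i, (Finsupp.single a b : Fin (n+1) →₀ ℕ) i = b := by
  simp [Finsupp.single_apply]

lemma sum_add_aux {n : ℕ} (f g : Fin (n+1) →₀ ℕ) :
    ∑ i, (f + g) i = (∑ i, f i) + ∑ i, g i := by
  rw [Finset.sum_congr rfl (fun i _ => Finsupp.add_apply f g i), Finset.sum_add_distrib]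

lemma sum_sub_aux {n : ℕ} {f g : Fin (n+1) →₀ ℕ} (h : g ≤ f) :
    ∑ i, (f - g) i = (∑ i, f i) - ∑ i, g i := by
  rw [Finset.sum_congr rfl (fun i _ => Finsupp.tsub_apply f g i),
    Finset.sum_tsub_distrib Finset.univ (fun i _ => Finsupp.le_def.mp h i)]

lemma Msp_eq_supported {k : Type*} [Field k] {n : ℕ} (T : Set (Fin (n+1) →₀ ℕ)) :
    Msp k n T = restrictSupport k T := by
  rw [restrictSupport_eq_span]

lemma mem_Msp {k : Type*} [Field k] {n : ℕ} {T : Set (Fin (n+1) →₀ ℕ)}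
    {p : MvPolynomial (Fin (n+1)) k} :
    p ∈ Msp k n T ↔ ↑p.support ⊆ T := by
  rw [Msp_eq_supported]; exact mem_restrictSupport_iff k

lemma finrank_supported_aux {k : Type*} [Field k] {n : ℕ} (T : Set (Fin (n+1) →₀ ℕ))
    (hT : T.Finite) : Module.finrank k (Finsupp.supported k k T) = T.ncard := by
  have : Fintype T := hT.fintype
  have e1 := (Finsupp.supportedEquivFinsupp (M := k) (R := k) T).finrank_eq
  have e2 := (Finsupp.linearEquivFunOnFinite k k T).finrank_eq
  rw [e1, e2, Module.finrank_fintype_fun_eq_card, Set.ncard_eq_toFinset_card']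
  simp

lemma finrank_Msp {k : Type*} [Field k] {n : ℕ} (T : Set (Fin (n+1) →₀ ℕ)) (hT : T.Finite) :
    Module.finrank k (Msp k n T) = T.ncard := by
  rw [Msp_eq_supported]
  have : Fintype T := hT.fintype
  rw [Module.finrank_eq_card_basis (basisRestrictSupport k T), Set.ncard_eq_toFinset_card']
  simp

lemma homog_eq_Msp {k : Type*} [Field k] {n : ℕ} (d : ℕ) :
    homogeneousSubmodule (Fin (n+1)) k d = Msp k n {ν | ∑ i, ν i = d} := by
  ext p
  rw [mem_homogeneousSubmodule, mem_Msp]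
  constructor
  · intro h ν hν
    have := h (Finsupp.mem_support_iff.mp hν)
    simpa [degEq, Finsupp.degree_eq_weight_one, Pi.one_def] using this
  · intro h ν hν
    have := h (Finsupp.mem_support_iff.mpr hν)
    simpa [degEq, Finsupp.degree_eq_weight_one, Pi.one_def] using this

lemma D_finite {n d : ℕ} : {ν : Fin (n+1) →₀ ℕ | ∑ i, ν i = d}.Finite := by
  have : {ν : Fin (n+1) →₀ ℕ | ∑ i, ν i = d} ⊆
      Set.Icc 0 (Finsupp.equivFunOnFinite.symm (fun _ => d)) := by
    intro ν hν
    refine ⟨bot_le, fun i => ?_⟩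
    simp only [Finsupp.coe_equivFunOnFinite_symm]
    calc ν i ≤ ∑ j, ν j := Finset.single_le_sum (fun j _ => Nat.zero_le _) (Finset.mem_univ i)
    _ = d := hν
  exact (Set.finite_Icc _ _).subset this

lemma exists_le_deg {n : ℕ} (m : ℕ) : ∀ (d : ℕ) (ν : Fin (n+1) →₀ ℕ), ∑ i, ν i = m + d →
    ∃ w : Fin (n+1) →₀ ℕ, w ≤ ν ∧ ∑ i, w i = m := by
  intro d
  induction d with
  | zero => exact fun ν hν => ⟨ν, le_refl _, hν⟩
  | succ d ih =>
    intro ν hν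
    have hpos : 0 < ∑ i, ν i := by omega
    obtain ⟨i, hi⟩ : ∃ i, 0 < ν i := by
      by_contra h
      push_neg at h
      simp only [Nat.le_zero] at h
      simp [Finset.sum_congr rfl (fun j _ => h j)] at hpos
    have hsle : (Finsupp.single i 1 : Fin (n+1) →₀ ℕ) ≤ ν := by
      rw [Finsupp.le_def]
      intro j
      by_cases hj : j = i
      · subst hj; simp only [Finsupp.single_eq_same]; omega
      · simp [Finsupp.single_eq_of_ne' (Ne.symm hj)]
    obtain ⟨w, hw1, hw2⟩ := ih (ν - Finsupp.single i 1) (by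
      rw [sum_sub_aux hsle, sum_single_aux, hν]; omega)
    exact ⟨w, hw1.trans tsub_le_self, hw2⟩

lemma Msp_mul {k : Type*} [Field k] {n : ℕ} (S T : Set (Fin (n+1) →₀ ℕ)) :
    (Msp k n S * Msp k n T : Submodule k (MvPolynomial (Fin (n+1)) k)) =
      Msp k n (Set.image2 (· + ·) S T) := by
  rw [Submodule.span_mul_span]
  congr 1
  ext p
  simp only [Set.mem_mul, Set.mem_image, Set.mem_image2]
  constructor
  · rintro ⟨x, ⟨a, ha, rfl⟩, y, ⟨b, hb, rfl⟩, rfl⟩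
    exact ⟨a + b, ⟨a, ha, b, hb, rfl⟩, by rw [monomial_mul, one_mul]⟩
  · rintro ⟨c, ⟨a, ha, b, hb, rfl⟩, rfl⟩
    exact ⟨_, ⟨a, ha, rfl⟩, _, ⟨b, hb, rfl⟩, by rw [monomial_mul, one_mul]⟩

/-- Corollary 5.2: let `J` be a graded ideal with `J_{m'} ≠ 0` for some `m' < m`, whose
degree `m` part is spanned by an initial revlex segment. If `J_{m+l} = S_l·J_m` for all
`l ≥ 0`, then the Hilbert function of `S/J` is eventually constant. -/
theorem stmt7 {k : Type*} [Field k] [CharZero k] (n m : ℕ) (hn : 1 ≤ n)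
    (J : Ideal (MvPolynomial (Fin (n + 1)) k))
    (hJ : J.IsHomogeneous (homogeneousSubmodule (Fin (n + 1)) k))
    (hlow : ∃ m' < m, (Submodule.restrictScalars k J ⊓
      homogeneousSubmodule (Fin (n + 1)) k m') ≠ ⊥)
    (W : Set (Fin (n + 1) →₀ ℕ)) (hW : IsRevLexSegment m W)
    (hspan : Submodule.restrictScalars k J ⊓ homogeneousSubmodule (Fin (n + 1)) k m =
      Submodule.span k ((fun ν => (monomial ν (1 : k) : MvPolynomial (Fin (n + 1)) k)) '' W))
    (hgen : ∀ l : ℕ,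
      Submodule.restrictScalars k J ⊓ homogeneousSubmodule (Fin (n + 1)) k (m + l) =
        (homogeneousSubmodule (Fin (n + 1)) k l *
          (Submodule.restrictScalars k J ⊓ homogeneousSubmodule (Fin (n + 1)) k m) :
          Submodule k (MvPolynomial (Fin (n + 1)) k))) :
    ∃ (c N : ℕ), ∀ d : ℕ, N ≤ d →
      Module.finrank k (homogeneousSubmodule (Fin (n + 1)) k d) -
        Module.finrank k ↥(Submodule.restrictScalars k J ⊓
          homogeneousSubmodule (Fin (n + 1)) k d) = c := by
  classical
  set D : ℕ → Set (Fin (n+1) →₀ ℕ) := fun d => {ν | ∑ i, ν i = d} with hD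
  set A : ℕ → Set (Fin (n+1) →₀ ℕ) := fun l => Set.image2 (· + ·) (D l) W with hA
  have hWm : ∀ w ∈ W, ∑ i, w i = m := hW.1
  have hkey : ∀ l, Submodule.restrictScalars k J ⊓ homogeneousSubmodule (Fin (n+1)) k (m + l)
      = Msp k n (A l) := by
    intro l
    rw [hgen l, hspan, homog_eq_Msp l]
    exact Msp_mul _ _
  obtain ⟨m', hm'lt, hne⟩ := hlow
  have hm1 : 1 ≤ m := by omega
  -- find μ ∈ W with μ (Fin.last n) ≥ 1
  obtain ⟨μ, hμW, hμn⟩ : ∃ μ ∈ W, 1 ≤ μ (Fin.last n) := by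
    obtain ⟨f, hf, hf0⟩ := Submodule.exists_mem_ne_zero_of_ne_bot hne
    have hfJ : f ∈ J := hf.1
    have hfh : f.IsHomogeneous m' := hf.2
    set e := m - m' with he
    set g : MvPolynomial (Fin (n+1)) k :=
      f * monomial (Finsupp.single (Fin.last n) e) 1 with hg
    have hgJ : g ∈ J := J.mul_mem_right _ hfJ
    have hsing : (Finsupp.single (Fin.last n) e : Fin (n+1) →₀ ℕ).degree = e := by
      rw [← degEq, sum_single_aux]
    have hgh : g.IsHomogeneous m := by
      have := hfh.mul (isHomogeneous_monomial (1 : k) hsing)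
      rwa [show m' + e = m by omega] at this
    have hgmem : g ∈ Submodule.restrictScalars k J ⊓ homogeneousSubmodule (Fin (n+1)) k m :=
      ⟨hgJ, hgh⟩
    rw [hspan] at hgmem
    have hgW : (g.support : Set (Fin (n+1) →₀ ℕ)) ⊆ W := mem_Msp.mp hgmem
    obtain ⟨ν, hν⟩ := (MvPolynomial.support_nonempty.mpr hf0)
    have hco : coeff (ν + Finsupp.single (Fin.last n) e) g ≠ 0 := by
      rw [hg, coeff_mul_monomial, mul_one]
      exact MvPolynomial.mem_support_iff.mp hν
    refine ⟨ν + Finsupp.single (Fin.last n) e, hgW (MvPolynomial.mem_support_iff.mpr hco), ?_⟩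
    rw [Finsupp.add_apply, Finsupp.single_eq_same]
    omega
  -- every degree-m exponent with last coordinate 0 is in W
  have hWn : ∀ β : Fin (n+1) →₀ ℕ, (∑ i, β i = m) → β (Fin.last n) = 0 → β ∈ W := by
    intro β hβ hβn
    refine hW.2 β μ hβ hμW ⟨Fin.last n, by omega, fun j hj => absurd hj ?_⟩
    exact not_lt.mpr (Fin.le_last j)
  -- A l ⊆ D (m + l)
  have hAD : ∀ l, A l ⊆ D (m + l) := by
    rintro l ν ⟨α, hα, w, hw, rfl⟩
    simp only [hD, Set.mem_setOf_eq] at hα ⊢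
    rw [sum_add_aux, hα, hWm w hw]
    omega
  -- the complement bijection
  have himg : ∀ l, (fun ν => ν + Finsupp.single (Fin.last n) 1) '' (D (m+l) \ A l)
      = D (m+l+1) \ A (l+1) := by
    intro l
    ext τ
    constructor
    · rintro ⟨ν, ⟨hνD, hνA⟩, rfl⟩
      simp only [hD, Set.mem_setOf_eq] at hνD
      constructor
      · simp only [hD, Set.mem_setOf_eq]
        rw [sum_add_aux, hνD, sum_single_aux]
      · rintro ⟨α, hα, w, hw, heq⟩
        simp only [hD, Set.mem_setOf_eq] at hα
        have hweq : ∀ i, ν i + (Finsupp.single (Fin.last n) 1 : Fin (n+1) →₀ ℕ) i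
            = α i + w i := by
          intro i
          have := congrArg (fun x : Fin (n+1) →₀ ℕ => x i) heq
          simpa [Finsupp.add_apply] using this.symm
        apply hνA
        by_cases hαl : 1 ≤ α (Fin.last n)
        · -- ν = (α - e_last) + w
          have hsle : (Finsupp.single (Fin.last n) 1 : Fin (n+1) →₀ ℕ) ≤ α := by
            rw [Finsupp.le_def]
            intro i
            by_cases hi : i = Fin.last n
            · subst hi; simpa using hαl
            · simp [Finsupp.single_eq_of_ne' (Ne.symm hi)]
          refine ⟨α - Finsupp.single (Fin.last n) 1, ?_, w, hw, ?_⟩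
          · simp only [hD, Set.mem_setOf_eq]
            rw [sum_sub_aux hsle, hα, sum_single_aux]
            omega
          · show α - Finsupp.single (Fin.last n) 1 + w = ν
            ext i
            rw [Finsupp.add_apply, Finsupp.tsub_apply]
            have h1 := hweq i
            by_cases hi : i = Fin.last n
            · subst hi
              rw [Finsupp.single_eq_same] at h1 ⊢
              omega
            · rw [Finsupp.single_eq_of_ne' (fun h => hi h.symm)] at h1 ⊢
              omega
        · -- α (last) = 0; find a witness j and use the revlex exchange
          push_neg at hαl
          have hαl0 : α (Fin.last n) = 0 := by omega
          have hwl : w (Fin.last n) = ν (Fin.last n) + 1 := by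
            have h1 := hweq (Fin.last n)
            rw [Finsupp.single_eq_same, hαl0] at h1
            omega
          obtain ⟨j, hjne, hjlt⟩ : ∃ j, j ≠ Fin.last n ∧ w j < ν j := by
            by_contra hc
            push_neg at hc
            have hnu : ∑ i, ν i = ∑ i ∈ Finset.univ.erase (Fin.last n), ν i
                + ν (Fin.last n) := (Finset.sum_erase_add _ _ (Finset.mem_univ _)).symm
            have hwu : ∑ i, w i = ∑ i ∈ Finset.univ.erase (Fin.last n), w i
                + w (Fin.last n) := (Finset.sum_erase_add _ _ (Finset.mem_univ _)).symm
            have hle : ∑ i ∈ Finset.univ.erase (Fin.last n), ν i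
                ≤ ∑ i ∈ Finset.univ.erase (Fin.last n), w i :=
              Finset.sum_le_sum (fun i hi => hc i (Finset.ne_of_mem_erase hi))
            rw [hνD] at hnu
            rw [hWm w hw] at hwu
            omega
          -- w' := w + e_j - e_last
          set w' : Fin (n+1) →₀ ℕ :=
            w + Finsupp.single j 1 - Finsupp.single (Fin.last n) 1 with hw'
          have hlast_le : (Finsupp.single (Fin.last n) 1 : Fin (n+1) →₀ ℕ)
              ≤ w + Finsupp.single j 1 := by
            rw [Finsupp.le_def]
            intro i
            by_cases hi : i = Fin.last n
            · subst hi
              rw [Finsupp.single_eq_same, Finsupp.add_apply,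
                Finsupp.single_eq_of_ne' hjne]
              omega
            · simp [Finsupp.single_eq_of_ne' (fun h => hi h.symm)]
          have hw'app : ∀ i, w' i = w i + (Finsupp.single j 1 : Fin (n+1) →₀ ℕ) i
              - (Finsupp.single (Fin.last n) 1 : Fin (n+1) →₀ ℕ) i := by
            intro i
            rw [hw', Finsupp.tsub_apply, Finsupp.add_apply]
          have hw'deg : ∑ i, w' i = m := by
            rw [hw', sum_sub_aux hlast_le, sum_add_aux, hWm w hw,
              sum_single_aux, sum_single_aux]
            omega
          have hw'W : w' ∈ W := by
            refine hW.2 w' w hw'deg hw ⟨Fin.last n, ?_, fun i hi => absurd hi ?_⟩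
            · rw [hw'app, Finsupp.single_eq_same, Finsupp.single_eq_of_ne' hjne]
              omega
            · exact not_lt.mpr (Fin.le_last i)
          have hw'le : w' ≤ ν := by
            rw [Finsupp.le_def]
            intro i
            rw [hw'app]
            have h1 := hweq i
            by_cases hi : i = Fin.last n
            · subst hi
              rw [Finsupp.single_eq_same] at h1 ⊢
              rw [Finsupp.single_eq_of_ne' hjne]
              omega
            · rw [Finsupp.single_eq_of_ne' (fun h => hi h.symm)] at h1 ⊢
              by_cases hij : i = j
              · subst hij
                rw [Finsupp.single_eq_same]
                omega
              · rw [Finsupp.single_eq_of_ne' (fun h => hij h.symm)]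
                omega
          refine ⟨ν - w', ?_, w', hw'W, ?_⟩
          · simp only [hD, Set.mem_setOf_eq]
            rw [sum_sub_aux hw'le, hνD, hw'deg]
            omega
          · exact tsub_add_cancel_of_le hw'le
    · rintro ⟨hτD, hτA⟩
      simp only [hD, Set.mem_setOf_eq] at hτD
      have hτl : 1 ≤ τ (Fin.last n) := by
        by_contra hc
        push_neg at hc
        have hτl0 : τ (Fin.last n) = 0 := by omega
        obtain ⟨w, hwle, hwdeg⟩ := exists_le_deg m (l+1) τ (by omega)
        have hwW : w ∈ W := by
          apply hWn w hwdeg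
          have := Finsupp.le_def.mp hwle (Fin.last n)
          omega
        apply hτA
        refine ⟨τ - w, ?_, w, hwW, ?_⟩
        · simp only [hD, Set.mem_setOf_eq]
          rw [sum_sub_aux hwle, hτD, hwdeg]
          omega
        · exact tsub_add_cancel_of_le hwle
      have hsle : (Finsupp.single (Fin.last n) 1 : Fin (n+1) →₀ ℕ) ≤ τ := by
        rw [Finsupp.le_def]
        intro i
        by_cases hi : i = Fin.last n
        · subst hi; simpa using hτl
        · simp [Finsupp.single_eq_of_ne' (Ne.symm hi)]
      refine ⟨τ - Finsupp.single (Fin.last n) 1, ⟨?_, ?_⟩, ?_⟩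
      · simp only [hD, Set.mem_setOf_eq]
        rw [sum_sub_aux hsle, hτD, sum_single_aux]
        omega
      · rintro ⟨α, hα, w, hw, heq⟩
        simp only [hD, Set.mem_setOf_eq] at hα
        apply hτA
        refine ⟨α + Finsupp.single (Fin.last n) 1, ?_, w, hw, ?_⟩
        · simp only [hD, Set.mem_setOf_eq]
          rw [sum_add_aux, hα, sum_single_aux]
        · show α + Finsupp.single (Fin.last n) 1 + w = τ
          have heq' : α + w = τ - Finsupp.single (Fin.last n) 1 := heq
          have h3 : α + Finsupp.single (Fin.last n) 1 + w
              = (α + w) + Finsupp.single (Fin.last n) 1 := by abel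
          rw [h3, heq', tsub_add_cancel_of_le hsle]
      · exact tsub_add_cancel_of_le hsle
  have hinj : Function.Injective
      (fun ν : Fin (n+1) →₀ ℕ => ν + Finsupp.single (Fin.last n) 1) :=
    add_left_injective _
  have hcard : ∀ l, (D (m+l) \ A l).ncard = (D m \ A 0).ncard := by
    intro l
    induction l with
    | zero => rfl
    | succ l ih =>
      rw [show m + (l+1) = m + l + 1 by omega, ← himg l,
        Set.ncard_image_of_injective _ hinj, ih]
  refine ⟨(D m \ A 0).ncard, m, fun d hd => ?_⟩
  obtain ⟨l, rfl⟩ : ∃ l, d = m + l := ⟨d - m, by omega⟩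
  have hDfin : (D (m+l)).Finite := D_finite
  have hAfin : (A l).Finite := hDfin.subset (hAD l)
  have h1 : Module.finrank k (homogeneousSubmodule (Fin (n+1)) k (m+l)) = (D (m+l)).ncard := by
    rw [homog_eq_Msp (m+l)]
    exact finrank_Msp _ hDfin
  have h2 : Module.finrank k ↥(Submodule.restrictScalars k J
      ⊓ homogeneousSubmodule (Fin (n+1)) k (m+l)) = (A l).ncard := by
    rw [hkey l]
    exact finrank_Msp _ hAfin
  rw [h1, h2, ← Set.ncard_diff (hAD l) hAfin, hcard l]
end

section
/- Let E be a finite-dimensional vector space with totally ordered basis {e_α}, F ⊆ E a d-dimensional subspace, and ⃗α = (α(1) ≻ ... ≻ α(d)) a decreasing index tuple. Then the initial subspace in(F) equals the span of e_{α(1)},...,e_{α(d)} if and only if the Plücker coordinate p_{⃗α}(F) ≠ 0 and p_{⃗α'}(F) = 0 for all index tuples ⃗α' ≻ ⃗α in the lexicographic order on decreasing d-tuples. -/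
/-- The initial subspace `in(F)` of a subspace `F ⊆ E` with respect to an ordered basis. -/
noncomputable def initialSubspace {k E ι : Type*} [Field k] [AddCommGroup E] [Module k E]
    [Fintype ι] [LinearOrder ι] (b : Module.Basis ι k E) (F : Submodule k E) : Submodule k E :=
  Submodule.span k {v | ∃ w ∈ F, ∃ h : (b.repr w).support.Nonempty,
    v = b ((b.repr w).support.max' h)}

/-- The Plücker coordinate `p_{⃗α}(F)` of the subspace spanned by a basis `w` of `F`,
with respect to the index tuple `s`: the coefficient of `e_{s 0} ∧ ⋯ ∧ e_{s (d-1)}`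
in `w 0 ∧ ⋯ ∧ w (d-1)`, computed as a determinant of coordinates. -/
noncomputable def pluecker {k E ι : Type*} [Field k] [AddCommGroup E] [Module k E]
    [Fintype ι] [LinearOrder ι] (b : Module.Basis ι k E) {d : ℕ} (w : Fin d → E)
    (s : Fin d → ι) : k :=
  Matrix.det (Matrix.of fun i j => b.repr (w j) (s i))

/-- `t ≻ s` in the lexicographic order on decreasing index tuples. -/
def TupleLexGt {ι : Type*} [LinearOrder ι] {d : ℕ} (t s : Fin d → ι) : Prop :=
  ∃ i : Fin d, (∀ j : Fin d, j < i → t j = s j) ∧ s i < t i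

namespace Stmt10Aux

variable {k E ι : Type*} [Field k] [AddCommGroup E] [Module k E] [Fintype ι] [LinearOrder ι]

/-- `α` is the leading (largest) index of the support of `x`. -/
def IsLead (b : Module.Basis ι k E) (x : E) (α : ι) : Prop :=
  b.repr x α ≠ 0 ∧ ∀ β, b.repr x β ≠ 0 → β ≤ α

theorem IsLead.eq_zero {b : Module.Basis ι k E} {x : E} {α β : ι} (h : IsLead b x α) (hβ : α < β) :
    b.repr x β = 0 := by
  by_contra hne
  exact absurd (h.2 β hne) (not_le.mpr hβ)

theorem isLead_max' (b : Module.Basis ι k E) (x : E) (h : (b.repr x).support.Nonempty) :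
    IsLead b x ((b.repr x).support.max' h) :=
  ⟨Finsupp.mem_support_iff.mp ((b.repr x).support.max'_mem h),
   fun _ hβ => Finset.le_max' _ _ (Finsupp.mem_support_iff.mpr hβ)⟩

theorem IsLead.exists_max' {b : Module.Basis ι k E} {x : E} {α : ι} (hx : IsLead b x α) :
    ∃ h : (b.repr x).support.Nonempty, (b.repr x).support.max' h = α := by
  have hmem : α ∈ (b.repr x).support := Finsupp.mem_support_iff.mpr hx.1
  refine ⟨⟨α, hmem⟩, le_antisymm ?_ (Finset.le_max' _ _ hmem)⟩
  exact hx.2 _ (Finsupp.mem_support_iff.mp ((b.repr x).support.max'_mem _))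

theorem support_nonempty_of_ne_zero (b : Module.Basis ι k E) {x : E} (hx : x ≠ 0) :
    (b.repr x).support.Nonempty := by
  rw [Finsupp.support_nonempty_iff]
  simpa using hx

/-- The set of leading indices of nonzero elements of `F`. -/
def InSet (b : Module.Basis ι k E) (F : Submodule k E) : Set ι := {α | ∃ x ∈ F, IsLead b x α}

theorem initialSubspace_eq (b : Module.Basis ι k E) (F : Submodule k E) :
    initialSubspace b F = Submodule.span k (b '' InSet b F) := by
  unfold initialSubspace
  congr 1
  ext y
  constructor
  · rintro ⟨x, hxF, h, rfl⟩
    exact ⟨_, ⟨x, hxF, isLead_max' b x h⟩, rfl⟩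
  · rintro ⟨α, ⟨x, hxF, hl⟩, rfl⟩
    obtain ⟨h, hm⟩ := hl.exists_max'
    exact ⟨x, hxF, h, by rw [hm]⟩

/-- A family of vectors with distinct leading indices is linearly independent. -/
theorem lead_li {n : Type*} [Fintype n] (b : Module.Basis ι k E) (v : n → E) (m : n → ι)
    (hl : ∀ i, IsLead b (v i) (m i)) (hm : Function.Injective m) :
    LinearIndependent k v := by
  classical
  rw [Fintype.linearIndependent_iff]
  intro c hc i0'
  by_contra hne
  set S : Finset n := Finset.univ.filter (fun i => c i ≠ 0) with hS
  have hSne : S.Nonempty := ⟨i0', by simp [hS, hne]⟩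
  obtain ⟨i0, hi0S, hmax⟩ := S.exists_max_image m hSne
  have hc0 : c i0 ≠ 0 := by
    have := Finset.mem_filter.mp hi0S
    exact this.2
  have hsum : ∑ i, c i * b.repr (v i) (m i0) = 0 := by
    have h1 : b.repr (∑ i, c i • v i) (m i0) = 0 := by rw [hc]; simp
    rw [map_sum, Finsupp.finset_sum_apply] at h1
    simpa [Finsupp.smul_apply, smul_eq_mul] using h1
  rw [Finset.sum_eq_single_of_mem i0 (Finset.mem_univ i0)] at hsum
  · exact (mul_ne_zero hc0 (hl i0).1) hsum
  · intro i _ hii0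
    by_cases hci : c i = 0
    · simp [hci]
    · have hiS : i ∈ S := by simp [hS, hci]
      have hle : m i ≤ m i0 := hmax i hiS
      have hlt : m i < m i0 := lt_of_le_of_ne hle (fun h => hii0 (hm h))
      rw [(hl i).eq_zero hlt, mul_zero]

/-- Chosen representatives for the leading indices span `F`. -/
theorem mem_span_pick (b : Module.Basis ι k E) (F : Submodule k E) (v : ι → E)
    (hv : ∀ α ∈ InSet b F, v α ∈ F ∧ IsLead b (v α) α) :
    ∀ x ∈ F, x ∈ Submodule.span k (v '' InSet b F) := by
  have main : ∀ α : ι, ∀ x ∈ F, (∀ β, b.repr x β ≠ 0 → β ≤ α) →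
      x ∈ Submodule.span k (v '' InSet b F) := by
    intro α
    induction α using WellFoundedLT.induction with
    | _ α IH =>
      intro x hxF hbound
      by_cases hx0 : x = 0
      · simp [hx0]
      have hsupp : (b.repr x).support.Nonempty := support_nonempty_of_ne_zero b hx0
      set γ := (b.repr x).support.max' hsupp with hγ
      have hlead : IsLead b x γ := isLead_max' b x hsupp
      have hγIn : γ ∈ InSet b F := ⟨x, hxF, hlead⟩
      obtain ⟨hvF, hvl⟩ := hv γ hγIn
      have hγα : γ ≤ α := hbound γ hlead.1
      set c : k := b.repr x γ / b.repr (v γ) γ with hcdef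
      set y : E := x - c • v γ with hy
      have hyF : y ∈ F := F.sub_mem hxF (F.smul_mem c hvF)
      have hyγ : b.repr y γ = 0 := by
        have hlv : b.repr (v γ) γ ≠ 0 := hvl.1
        simp only [hy, map_sub, map_smul, Finsupp.sub_apply, Finsupp.smul_apply, smul_eq_mul,
          hcdef]
        rw [div_mul_cancel₀ _ hlv, sub_self]
      have hybound : ∀ β, b.repr y β ≠ 0 → β < γ := by
        intro β hβ
        have hle : β ≤ γ := by
          by_contra hgt
          push_neg at hgt
          apply hβ
          simp [hy, map_sub, map_smul, Finsupp.sub_apply, Finsupp.smul_apply,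
            hlead.eq_zero hgt, hvl.eq_zero hgt]
        exact lt_of_le_of_ne hle (fun h => hβ (by rw [h]; exact hyγ))
      have hvmem : v γ ∈ Submodule.span k (v '' InSet b F) :=
        Submodule.subset_span ⟨γ, hγIn, rfl⟩
      by_cases hy0 : y = 0
      · have hxe : x = c • v γ := by
          have h0 : x - c • v γ = 0 := by rw [← hy]; exact hy0
          exact sub_eq_zero.mp h0
        rw [hxe]
        exact Submodule.smul_mem _ _ hvmem
      · have hysupp : (b.repr y).support.Nonempty := support_nonempty_of_ne_zero b hy0
        set γ' := (b.repr y).support.max' hysupp with hγ'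
        have hγ'lt : γ' < γ := hybound γ' (isLead_max' b y hysupp).1
        have hymem := IH γ' (lt_of_lt_of_le hγ'lt hγα) y hyF
          (fun β hβ => (isLead_max' b y hysupp).2 β hβ)
        have hxe : x = y + c • v γ := by rw [hy]; abel
        rw [hxe]
        exact Submodule.add_mem _ hymem (Submodule.smul_mem _ _ hvmem)
  intro x hxF
  by_cases hx0 : x = 0
  · simp [hx0]
  · have hsupp : (b.repr x).support.Nonempty := support_nonempty_of_ne_zero b hx0
    exact main ((b.repr x).support.max' hsupp) x hxF
      (fun β hβ => Finset.le_max' _ _ (Finsupp.mem_support_iff.mpr hβ))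

/-- Determinantal criterion for the Plücker coordinate to vanish. -/
theorem pluecker_eq_zero_iff (b : Module.Basis ι k E) {d : ℕ} (w : Fin d → E)
    (hw : LinearIndependent k w) (t : Fin d → ι) :
    pluecker b w t = 0 ↔
      ∃ x ∈ Submodule.span k (Set.range w), x ≠ 0 ∧ ∀ i, b.repr x (t i) = 0 := by
  classical
  rw [pluecker, ← Matrix.exists_mulVec_eq_zero_iff]
  constructor
  · rintro ⟨c, hc0, hmul⟩
    refine ⟨∑ j, c j • w j, ?_, ?_, ?_⟩
    · exact Submodule.sum_mem _ fun j _ =>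
        Submodule.smul_mem _ _ (Submodule.subset_span ⟨j, rfl⟩)
    · intro h0
      exact hc0 (funext (Fintype.linearIndependent_iff.mp hw c h0))
    · intro i
      have hmi := congrFun hmul i
      simp only [Matrix.mulVec, dotProduct, Matrix.of_apply, Pi.zero_apply] at hmi
      rw [map_sum, Finsupp.finset_sum_apply]
      simpa [Finsupp.smul_apply, smul_eq_mul, mul_comm] using hmi
  · rintro ⟨x, hxmem, hx0, hcoord⟩
    obtain ⟨c, hcx⟩ := (Submodule.mem_span_range_iff_exists_fun k).mp hxmem
    refine ⟨c, ?_, ?_⟩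
    · intro h0
      apply hx0
      rw [← hcx]
      simp [h0]
    · funext i
      have := hcoord i
      rw [← hcx, map_sum, Finsupp.finset_sum_apply] at this
      simp only [Matrix.mulVec, dotProduct, Matrix.of_apply, Pi.zero_apply]
      simpa [Finsupp.smul_apply, smul_eq_mul, mul_comm] using this

theorem exists_first_diff {α : Type*} {d : ℕ} {s t : Fin d → α} (h : s ≠ t) :
    ∃ i : Fin d, (∀ j, j < i → s j = t j) ∧ s i ≠ t i := by
  classical
  have hne : (Finset.univ.filter fun i => s i ≠ t i).Nonempty := by
    rcases Function.ne_iff.mp h with ⟨i, hi⟩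
    exact ⟨i, by simp [hi]⟩
  refine ⟨Finset.min' _ hne, ?_, (Finset.mem_filter.mp (Finset.min'_mem _ hne)).2⟩
  intro j hj
  by_contra hne'
  exact absurd (Finset.min'_le _ j (by simp [hne'])) (not_le.mpr hj)

theorem no_lexGt_of_range_subset {d : ℕ} {s t : Fin d → ι}
    (hs : StrictAnti s) (ht : StrictAnti t) (hr : Set.range s ⊆ Set.range t)
    {i0 : Fin d} (hbef : ∀ j, j < i0 → s j = t j) (hlt : t i0 < s i0) : False := by
  obtain ⟨j, hj⟩ := hr (Set.mem_range_self i0)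
  have hji : j < i0 := by
    rcases lt_or_ge j i0 with h | h
    · exact h
    · have h2 : t j ≤ t i0 := ht.antitone h
      rw [hj] at h2
      exact absurd h2 (not_le.mpr hlt)
  have hss : s j = s i0 := by rw [hbef j hji, hj]
  exact absurd (hs.injective hss) (ne_of_lt hji)

theorem strictAnti_eq_of_range_eq {d : ℕ} {s t : Fin d → ι}
    (hs : StrictAnti s) (ht : StrictAnti t) (hr : Set.range s = Set.range t) : s = t := by
  by_contra hne
  obtain ⟨i0, hbef, hdiff⟩ := exists_first_diff hne
  rcases lt_or_gt_of_ne hdiff with h | h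
  · exact no_lexGt_of_range_subset ht hs hr.symm.subset
      (fun j hj => (hbef j hj).symm) h
  · exact no_lexGt_of_range_subset hs ht hr.subset hbef h

end Stmt10Aux

open Stmt10Aux in
/-- The initial subspace of `F` equals the coordinate subspace `span(e_{α(1)},…,e_{α(d)})`
iff the Plücker coordinate `p_{⃗α}(F)` is nonzero and all Plücker coordinates at
lexicographically larger decreasing tuples vanish. -/
theorem stmt10 {k E ι : Type*} [Field k] [AddCommGroup E] [Module k E]
    [Fintype ι] [LinearOrder ι] (b : Module.Basis ι k E) (F : Submodule k E) (d : ℕ)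
    (w : Fin d → E) (hw : LinearIndependent k w)
    (hspan : Submodule.span k (Set.range w) = F)
    (s : Fin d → ι) (hs : StrictAnti s) :
    initialSubspace b F = Submodule.span k (Set.range (b ∘ s)) ↔
      (pluecker b w s ≠ 0 ∧
        ∀ t : Fin d → ι, StrictAnti t → TupleLexGt t s → pluecker b w t = 0) := by
  classical
  subst hspan
  set F := Submodule.span k (Set.range w) with hF
  have : Module.Finite k E := Module.Finite.of_basis b
  have hfinF : Module.finrank k F = d := by
    rw [hF, finrank_span_eq_card hw, Fintype.card_fin]
  -- choose representatives for leading indices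
  have hch : ∀ α : ι, ∃ x : E, α ∈ InSet b F → x ∈ F ∧ IsLead b x α := by
    intro α
    by_cases hα : α ∈ InSet b F
    · obtain ⟨x, hx1, hx2⟩ := hα
      exact ⟨x, fun _ => ⟨hx1, hx2⟩⟩
    · exact ⟨0, fun h => absurd h hα⟩
  choose v hv using hch
  have hspanv : Submodule.span k (v '' InSet b F) = F := by
    apply le_antisymm
    · rw [Submodule.span_le]
      rintro _ ⟨α, hα, rfl⟩
      exact (hv α hα).1
    · intro x hx
      exact mem_span_pick b F v hv x hx
  set S : Finset ι := Finset.univ.filter (fun α => α ∈ InSet b F) with hSdef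
  have hmemS : ∀ α, α ∈ S ↔ α ∈ InSet b F := fun α => by simp [hSdef]
  have hcoeS : (S : Set ι) = InSet b F := by ext α; simpa using hmemS α
  have hcard : S.card = d := by
    apply le_antisymm
    · have hli : LinearIndependent k (fun a : S => v a) :=
        lead_li b _ (fun a : S => (a : ι))
          (fun a => (hv a ((hmemS a).mp a.2)).2) Subtype.val_injective
      have hliF : LinearIndependent k
          (fun a : S => (⟨v a, (hv a ((hmemS a).mp a.2)).1⟩ : F)) :=
        LinearIndependent.of_comp F.subtype hli
      have := hliF.fintype_card_le_finrank
      rwa [Fintype.card_coe, hfinF] at this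
    · have h1 : v '' InSet b F = ((S.image v : Finset E) : Set E) := by
        rw [Finset.coe_image, hcoeS]
      calc d = Module.finrank k F := hfinF.symm
        _ = Module.finrank k (Submodule.span k (v '' InSet b F)) := by rw [hspanv]
        _ ≤ (S.image v).card := by
            rw [h1]; exact finrank_span_finset_le_card _
        _ ≤ S.card := Finset.card_image_le
  set σ : Fin d → ι := fun i => S.orderEmbOfFin hcard i.rev with hσdef
  have hσanti : StrictAnti σ := fun i j hij =>
    (S.orderEmbOfFin hcard).strictMono (Fin.rev_lt_rev.mpr hij)
  have hσrange : Set.range σ = InSet b F := by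
    rw [← hcoeS]
    have h0 : Set.range σ = Set.range (S.orderEmbOfFin hcard) := by
      ext α
      constructor
      · rintro ⟨i, rfl⟩; exact ⟨i.rev, rfl⟩
      · rintro ⟨i, rfl⟩; exact ⟨i.rev, by simp [hσdef, Fin.rev_rev]⟩
    rw [h0, Finset.range_orderEmbOfFin]
  have hσmem : ∀ i, σ i ∈ InSet b F := fun i => hσrange ▸ Set.mem_range_self i
  have hu : ∀ i, v (σ i) ∈ F ∧ IsLead b (v (σ i)) (σ i) := fun i => hv (σ i) (hσmem i)
  -- the Plücker coordinate at σ is nonzero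
  have hpσ : pluecker b w σ ≠ 0 := by
    rw [Ne, pluecker_eq_zero_iff b w hw σ]
    rintro ⟨x, hxF, hx0, hcoord⟩
    have hsupp : (b.repr x).support.Nonempty := support_nonempty_of_ne_zero b hx0
    have hlead : IsLead b x ((b.repr x).support.max' hsupp) := isLead_max' b x hsupp
    have hmem : (b.repr x).support.max' hsupp ∈ InSet b F := ⟨x, hxF, hlead⟩
    rw [← hσrange] at hmem
    obtain ⟨i, hi⟩ := hmem
    have := hcoord i
    rw [hi] at this
    exact hlead.1 this
  -- Plücker coordinates vanish at decreasing tuples exceeding σ somewhere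
  have hvanish : ∀ t : Fin d → ι, StrictAnti t → (∃ i0 : Fin d, σ i0 < t i0) →
      pluecker b w t = 0 := by
    rintro t hta ⟨i0, hi0⟩
    rw [pluecker_eq_zero_iff b w hw t]
    set u : {j : Fin d // i0 ≤ j} → E := fun j => v (σ j) with hudef
    have huli : LinearIndependent k u :=
      lead_li b u (fun j => σ j) (fun j => (hu j.1).2)
        (hσanti.injective.comp Subtype.val_injective)
    set W : Submodule k E := Submodule.span k (Set.range u) with hW
    have hWF : W ≤ F := by
      rw [hW, Submodule.span_le]
      rintro _ ⟨j, rfl⟩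
      exact (hu j.1).1
    have hWrank : Module.finrank k W = Fintype.card {j : Fin d // i0 ≤ j} :=
      finrank_span_eq_card huli
    set ψ : E →ₗ[k] ({i : Fin d // i0 < i} → k) :=
      LinearMap.pi (fun i => (Finsupp.lapply (t i.1)).comp b.repr.toLinearMap) with hψ
    have hcardlt : Fintype.card {i : Fin d // i0 < i} < Fintype.card {j : Fin d // i0 ≤ j} := by
      refine Fintype.card_lt_of_injective_of_notMem
        (fun i : {i : Fin d // i0 < i} => (⟨i.1, le_of_lt i.2⟩ : {j : Fin d // i0 ≤ j}))
        (fun a b' hab => Subtype.ext (by simpa using hab)) (b := ⟨i0, le_rfl⟩) ?_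
      rintro ⟨⟨i, hi⟩, hieq⟩
      have : i = i0 := by simpa using hieq
      exact absurd (this ▸ hi) (lt_irrefl i0)
    have hnotinj : ¬ Function.Injective (ψ.domRestrict W) := by
      intro hinj
      have := LinearMap.finrank_le_finrank_of_injective hinj
      rw [hWrank, Module.finrank_fintype_fun_eq_card] at this
      omega
    have hker : LinearMap.ker (ψ.domRestrict W) ≠ ⊥ := by
      rwa [Ne, LinearMap.ker_eq_bot]
    obtain ⟨x₀, hx₀ker, hx₀ne⟩ := (Submodule.ne_bot_iff _).mp hker
    have hWsupp : ∀ x ∈ W, ∀ β, σ i0 < β → b.repr x β = 0 := by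
      intro x hx
      refine Submodule.span_induction ?_ ?_ ?_ ?_ hx
      · rintro _ ⟨j, rfl⟩ β hβ
        refine ((hu j.1).2).eq_zero (lt_of_le_of_lt ?_ hβ)
        exact hσanti.antitone j.2
      · intro β _; simp
      · intro y z _ _ hy hz β hβ
        rw [map_add, Finsupp.add_apply, hy β hβ, hz β hβ, add_zero]
      · intro a y _ hy β hβ
        rw [map_smul, Finsupp.smul_apply, hy β hβ, smul_zero]
    refine ⟨(x₀ : E), hWF x₀.2, by simpa using hx₀ne, ?_⟩
    intro i
    rcases le_or_gt i i0 with hile | hilt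
    · apply hWsupp _ x₀.2
      exact lt_of_lt_of_le hi0 (hta.antitone hile)
    · have hψ0 : ψ.domRestrict W x₀ = 0 := LinearMap.mem_ker.mp hx₀ker
      have := congrFun hψ0 ⟨i, hilt⟩
      simpa [hψ, LinearMap.domRestrict_apply, LinearMap.pi_apply, Finsupp.lapply_apply] using this
  have hvanish' : ∀ t : Fin d → ι, StrictAnti t → TupleLexGt t σ → pluecker b w t = 0 := by
    rintro t ht ⟨i0, _, hlt⟩
    exact hvanish t ht ⟨i0, hlt⟩
  constructor
  · intro hEq
    rw [initialSubspace_eq] at hEq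
    have h2 : Submodule.span k (b '' InSet b F) = Submodule.span k (b '' Set.range s) := by
      rw [hEq, Set.range_comp]
    have hr : InSet b F = Set.range s := by
      ext α
      constructor
      · intro hα
        have hmem : b α ∈ Submodule.span k (b '' InSet b F) := b.self_mem_span_image.mpr hα
        rw [h2] at hmem
        exact b.self_mem_span_image.mp hmem
      · intro hα
        have hmem : b α ∈ Submodule.span k (b '' Set.range s) := b.self_mem_span_image.mpr hα
        rw [← h2] at hmem
        exact b.self_mem_span_image.mp hmem
    have hsσ : s = σ := strictAnti_eq_of_range_eq hs hσanti (by rw [← hr, hσrange])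
    rw [hsσ]
    exact ⟨hpσ, hvanish'⟩
  · rintro ⟨hps, hvan⟩
    have hsσ : s = σ := by
      by_contra hne
      obtain ⟨i0, hbef, hdiff⟩ := exists_first_diff hne
      rcases lt_or_gt_of_ne hdiff with h | h
      · exact hpσ (hvan σ hσanti ⟨i0, fun j hj => (hbef j hj).symm, h⟩)
      · exact hps (hvanish s hs ⟨i0, h⟩)
    rw [initialSubspace_eq, Set.range_comp, ← hσrange, ← hsσ]
end

section
/- Let I be the principal ideal of k[x_0,...,x_n] (n ≥ 2) generated by a nonzero homogeneous polynomial f of degree d ≥ 1. Then the (n+1)-dimensional subspace I_{d+1} = span(x_0 f, x_1 f, ..., x_n f) of S_{d+1} has the property: every monomial appearing with nonzero coefficient in the wedge product x_0 f ∧ x_1 f ∧ ... ∧ x_n f ∈ Λ^{n+1} S_{d+1} is a wedge e_{μ_1} ∧ ... ∧ e_{μ_{n+1}} of degree d+1 monomials μ_1,...,μ_{n+1} whose product is divisible by x_i for every 0 ≤ i ≤ n. -/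
open MvPolynomial

/-- Section 5, hypersurface example: for a nonzero homogeneous `f` of degree `d ≥ 1` in
`k[x_0,…,x_n]`, `n ≥ 2`, every basis wedge `e_{μ_0} ∧ ⋯ ∧ e_{μ_n}` of degree `d+1`
monomials occurring with nonzero coefficient in `x_0 f ∧ ⋯ ∧ x_n f` (the coefficient
being the determinant `det(coeff_{μ_i}(x_j f))`) has `μ_0 ⋯ μ_n` divisible by every
variable `x_i`. -/
theorem stmt13 {k : Type*} [Field k] [CharZero k] (n d : ℕ) (hn : 2 ≤ n) (hd : 1 ≤ d)
    (f : MvPolynomial (Fin (n + 1)) k) (hf : f.IsHomogeneous d) (hf0 : f ≠ 0)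
    (μ : Fin (n + 1) → (Fin (n + 1) →₀ ℕ)) (hμ : ∀ j, ∑ i, μ j i = d + 1)
    (hdet : Matrix.det (Matrix.of fun i j : Fin (n + 1) =>
      coeff (μ i) ((X j : MvPolynomial (Fin (n + 1)) k) * f)) ≠ 0) :
    ∀ i : Fin (n + 1), 0 < ∑ j, μ j i := by
  intro i
  by_contra h
  push_neg at h
  have hzero : ∀ r, μ r i = 0 := by
    intro r
    have h0 : ∑ j, μ j i = 0 := Nat.le_antisymm h (Nat.zero_le _)
    exact Finset.sum_eq_zero_iff.mp h0 r (Finset.mem_univ r)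
  apply hdet
  apply Matrix.det_eq_zero_of_column_eq_zero i
  intro r
  have : (X i : MvPolynomial (Fin (n + 1)) k) * f = f * X i := mul_comm _ _
  simp only [Matrix.of_apply, this, coeff_mul_X']
  rw [if_neg]
  simp [Finsupp.mem_support_iff, hzero r]
end
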